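/- Let p be an odd prime and let R be a commutative ring of characteristic p. For every Witt vector a over R (an element of the ring of p-typical Witt vectors 𝕎(R)), setting s = F(a) − a where F is the Witt vector Frobenius, one has: (i) the 0-th coefficient of s equals (a₀)^p − a₀, and (ii) the 1-st coefficient of s equals (a₁)^p − a₁ − Σ_{i=1}^{p−1} (−1)^i · c_i · (a₀)^{p(p−i)+i}, where a₀, a₁ are the 0-th and 1-st coefficients of a and c_i denotes the image in R of the integer C(p,i)/p = (p−1)!/(i!·(p−i)!). -/

import Mathlib

open MvPolynomial Finset

/-- Binomial expansion of `A^p - B^p - (A-B)^p` for odd `p`. -/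
lemma sub_pow_expand {S : Type*} [CommRing S] {p : ℕ} (hp : p.Prime) (hodd : Odd p)
    (A B : S) :
    A ^ p - B ^ p - (A - B) ^ p =
      - ∑ i ∈ Finset.Icc 1 (p - 1),
          (-1 : S) ^ i * (p.choose i : S) * A ^ (p - i) * B ^ i := by
  have hp1 : 1 ≤ p := hp.one_lt.le
  rw [sub_eq_add_neg A B, add_pow]
  rw [Finset.sum_range_succ]
  have hins : Finset.range p = insert 0 (Finset.Icc 1 (p - 1)) := by
    ext k; simp; omega
  rw [hins, Finset.sum_insert (by simp)]
  simp only [pow_zero, one_pow, Nat.choose_self, Nat.cast_one, mul_one, Nat.sub_zero,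
    Nat.choose_zero_right, one_mul, tsub_self]
  rw [hodd.neg_pow]
  have hre : ∑ k ∈ Finset.Icc 1 (p - 1), A ^ k * (-B) ^ (p - k) * (p.choose k : S) =
      ∑ i ∈ Finset.Icc 1 (p - 1), (-1 : S) ^ i * (p.choose i : S) * A ^ (p - i) * B ^ i := by
    refine Finset.sum_nbij' (fun k => p - k) (fun k => p - k) ?_ ?_ ?_ ?_ ?_
    · intro k hk; simp only [Finset.mem_Icc] at *; omega
    · intro k hk; simp only [Finset.mem_Icc] at *; omega
    · intro k hk; simp only [Finset.mem_Icc] at hk; omega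
    · intro k hk; simp only [Finset.mem_Icc] at hk; omega
    · intro k hk
      simp only [Finset.mem_Icc] at hk
      have h1 : p - (p - k) = k := by omega
      have h3 : p.choose (p - k) = p.choose k := Nat.choose_symm (by omega : k ≤ p)
      rw [h1, h3, neg_pow]
      ring
  rw [hre]
  ring

/-- Explicit formula for the degree-one Witt subtraction polynomial, `p` odd. -/
lemma wittSub_one_eq (p : ℕ) [hp : Fact p.Prime] (hodd : Odd p) :
    WittVector.wittSub p 1 =
      (X (0,1) - X (1,1) -
        ∑ i ∈ Finset.Icc 1 (p - 1),
          C ((-1 : ℤ) ^ i * ((p.choose i / p : ℕ) : ℤ)) * X (0,0) ^ (p - i) * X (1,0) ^ i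
        : MvPolynomial (Fin 2 × ℕ) ℤ) := by
  have hp' := hp.out
  have hpz : (C (p : ℤ) : MvPolynomial (Fin 2 × ℕ) ℤ) ≠ 0 := by
    simp [C_eq_zero]
    exact_mod_cast hp'.ne_zero
  apply mul_left_cancel₀ hpz
  have key := wittStructureInt_prop p (X 0 - X 1 : MvPolynomial (Fin 2) ℤ) 1
  rw [wittPolynomial_one] at key
  simp only [map_add, map_mul, map_sub, map_pow, bind₁_X_right, bind₁_C_right,
    rename_X, algHom_C, MvPolynomial.algebraMap_eq] at key
  have h0 : wittStructureInt p (X 0 - X 1 : MvPolynomial (Fin 2) ℤ) 0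
      = (X (0,0) - X (1,0) : MvPolynomial (Fin 2 × ℕ) ℤ) := by
    have := WittVector.wittSub_zero (p := p)
    rwa [WittVector.wittSub] at this
  rw [h0] at key
  have key2 : C (p : ℤ) * WittVector.wittSub p 1 =
      C (p : ℤ) * X (0,1) - C (p : ℤ) * X (1,1) +
        (X (0,0) ^ p - X (1,0) ^ p - (X (0,0) - X (1,0)) ^ p) := by
    rw [WittVector.wittSub]
    linear_combination key
  rw [key2, sub_pow_expand hp' hodd]
  rw [mul_sub, mul_sub, Finset.mul_sum]
  have : ∀ i ∈ Finset.Icc 1 (p - 1),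
      C (p : ℤ) * (C ((-1 : ℤ) ^ i * ((p.choose i / p : ℕ) : ℤ)) *
        X (0,0) ^ (p - i) * X (1,0) ^ i)
      = (-1 : MvPolynomial (Fin 2 × ℕ) ℤ) ^ i * (p.choose i : MvPolynomial (Fin 2 × ℕ) ℤ)
          * X (0,0) ^ (p - i) * X (1,0) ^ i := by
    intro i hi
    simp only [Finset.mem_Icc] at hi
    have hdvd : p ∣ p.choose i := hp'.dvd_choose_self (by omega) (by omega)
    have hc : (p : ℤ) * ((p.choose i / p : ℕ) : ℤ) = (p.choose i : ℤ) := by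
      rw [← Nat.cast_mul, Nat.mul_div_cancel' hdvd]
    have : (C (p : ℤ) : MvPolynomial (Fin 2 × ℕ) ℤ) *
        C ((-1 : ℤ) ^ i * ((p.choose i / p : ℕ) : ℤ))
        = (-1 : MvPolynomial (Fin 2 × ℕ) ℤ) ^ i * (p.choose i : MvPolynomial (Fin 2 × ℕ) ℤ) := by
      rw [← map_mul]
      have : (p : ℤ) * ((-1 : ℤ) ^ i * ((p.choose i / p : ℕ) : ℤ))
          = (-1 : ℤ) ^ i * (p.choose i : ℤ) := by rw [mul_left_comm, hc]
      rw [this, map_mul, map_pow, map_neg, map_one, map_natCast]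
    linear_combination (X (0,0) ^ (p - i) * X (1,0) ^ i : MvPolynomial (Fin 2 × ℕ) ℤ) * this
  rw [Finset.sum_congr rfl this]
  ring

/-- The `n = 2` case of the Artin–Schreier–Witt unfolding (Proposition 2.2
combined with equation (3.3)): for a Witt vector `a` over a ring of
characteristic `p`, the coefficients of `F(a) − a` are as stated. -/
theorem witt_frobenius_sub_coeff
    (p : ℕ) [hp : Fact p.Prime] (hodd : Odd p)
    (R : Type*) [CommRing R] [CharP R p]
    (a s : WittVector p R)
    (hs : s = WittVector.frobenius a - a) :
    s.coeff 0 = a.coeff 0 ^ p - a.coeff 0 ∧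
    s.coeff 1 = a.coeff 1 ^ p - a.coeff 1 -
      ∑ i ∈ Finset.Icc 1 (p - 1),
        (-1 : R) ^ i * ((p.choose i / p : ℕ) : R) *
          a.coeff 0 ^ (p * (p - i) + i) := by
  subst hs
  constructor
  · rw [WittVector.sub_coeff, WittVector.wittSub_zero]
    simp [WittVector.peval, Function.uncurry, WittVector.coeff_frobenius_charP]
  · rw [WittVector.sub_coeff, wittSub_one_eq p hodd]
    simp only [WittVector.peval, map_sub, map_sum, map_mul, map_pow, aeval_X, aeval_C,
      Function.uncurry, Matrix.cons_val_zero, Matrix.cons_val_one, Matrix.head_cons,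
      WittVector.coeff_frobenius_charP]
    congr 1
    refine Finset.sum_congr rfl fun i hi => ?_
    simp only [map_mul, map_pow, map_neg, map_one, map_natCast]
    rw [← pow_mul, mul_assoc, ← pow_add]
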